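/- Let d ≥ 1 be an integer, 1 < α₀ < ϑ₀ < 2, c₂ ≥ 1, and κ, η > 0. There exists a constant C ≥ 1, depending only on d, α₀, ϑ₀ and c₂, such that for every α ∈ [α₀, ϑ₀], every pair of invertible real d×d matrices A, B satisfying c₂^{−1}·‖v‖² ≤ ‖Av‖² ≤ c₂·‖v‖² and c₂^{−1}·‖v‖² ≤ ‖Bv‖² ≤ c₂·‖v‖² for all v ∈ ℝ^d, and every pair of points x, y ∈ ℝ^d with 0 < ‖x−y‖ ≤ min(κ, η)/(4c₂²): ∫_{ℝ^d} ( q_Ψ(z) + q_{Ψ⁻¹}(z) ) dz ≥ C^{−1}·‖x−y‖^{−α}. -/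

import Mathlib

open Real MeasureTheory Metric

/-- The constant `c_{d,α} = α·2^(α−2)·Γ((d+α)/2) / (π^(d/2)·Γ((2−α)/2))`. -/
noncomputable def stableConst (d : ℕ) (α : ℝ) : ℝ :=
  α * (2 : ℝ) ^ (α - 2) * Real.Gamma ((d + α) / 2) /
    (Real.pi ^ ((d : ℝ) / 2) * Real.Gamma ((2 - α) / 2))

/-- The radial truncation `(w)_κ = (min(κ,‖w‖)/‖w‖)·w`. -/
noncomputable def truncVec {d : ℕ} (κ : ℝ) (w : EuclideanSpace ℝ (Fin d)) :
    EuclideanSpace ℝ (Fin d) :=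
  (min κ ‖w‖ / ‖w‖) • w

/-- The map `Ψ(z) = B⁻¹(Az + (x−y)_κ)`. -/
noncomputable def psiMap {d : ℕ} (κ : ℝ) (A B : Matrix (Fin d) (Fin d) ℝ)
    (x y : EuclideanSpace ℝ (Fin d)) (z : EuclideanSpace ℝ (Fin d)) :
    EuclideanSpace ℝ (Fin d) :=
  Matrix.toEuclideanLin B⁻¹ (Matrix.toEuclideanLin A z + truncVec κ (x - y))

/-- The inverse map `Ψ⁻¹(z) = A⁻¹(Bz − (x−y)_κ)`. -/
noncomputable def psiInvMap {d : ℕ} (κ : ℝ) (A B : Matrix (Fin d) (Fin d) ℝ)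
    (x y : EuclideanSpace ℝ (Fin d)) (z : EuclideanSpace ℝ (Fin d)) :
    EuclideanSpace ℝ (Fin d) :=
  Matrix.toEuclideanLin A⁻¹ (Matrix.toEuclideanLin B z - truncVec κ (x - y))

/-- The density
`min( 𝟙_{0<‖z‖≤η}·c_{d,α}·‖z‖^{−(d+α)},
      𝟙_{0<‖Φ(z)‖≤η}·c_{d,α}·detfac·‖Φ(z)‖^{−(d+α)} )`. -/
noncomputable def couplingDensity {d : ℕ} (α η detfac : ℝ)
    (Φ : EuclideanSpace ℝ (Fin d) → EuclideanSpace ℝ (Fin d))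
    (z : EuclideanSpace ℝ (Fin d)) : ℝ :=
  min (if 0 < ‖z‖ ∧ ‖z‖ ≤ η then stableConst d α * ‖z‖ ^ (-((d : ℝ) + α)) else 0)
      (if 0 < ‖Φ z‖ ∧ ‖Φ z‖ ≤ η then
          stableConst d α * detfac * ‖Φ z‖ ^ (-((d : ℝ) + α)) else 0)

/-! ### Auxiliary lemmas -/

lemma stableConst_pos {d : ℕ} {α : ℝ} (h0 : 0 < α) (h2 : α < 2) : 0 < stableConst d α := by
  have h1 : 0 < Real.Gamma ((d + α) / 2) := Real.Gamma_pos_of_pos (by positivity)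
  have h3 : 0 < Real.Gamma ((2 - α) / 2) :=
    Real.Gamma_pos_of_pos (by simp only [div_pos_iff]; left; constructor <;> linarith)
  have h4 : (0:ℝ) < Real.pi ^ ((d : ℝ) / 2) := Real.rpow_pos_of_pos Real.pi_pos _
  have h5 : (0:ℝ) < (2:ℝ) ^ (α - 2) := Real.rpow_pos_of_pos (by norm_num) _
  unfold stableConst
  positivity

lemma gamma_contAt {y : ℝ} (hy : 0 < y) : ContinuousAt Real.Gamma y :=
  (Real.differentiableAt_Gamma (fun m => by
    have h2 : (0:ℝ) ≤ m := Nat.cast_nonneg m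
    intro h; rw [h] at hy; linarith)).continuousAt

lemma stableConst_min (d : ℕ) {α₀ ϑ₀ : ℝ} (h1 : 1 < α₀) (h12 : α₀ < ϑ₀) (h2 : ϑ₀ < 2) :
    ∃ m > 0, ∀ α ∈ Set.Icc α₀ ϑ₀, m ≤ stableConst d α := by
  have hne : (Set.Icc α₀ ϑ₀).Nonempty := Set.nonempty_Icc.2 h12.le
  have hcont : ContinuousOn (stableConst d) (Set.Icc α₀ ϑ₀) := by
    intro x hx
    obtain ⟨hx1, hx2⟩ := hx
    have hG1 : ContinuousAt (fun α : ℝ => Real.Gamma ((d + α) / 2)) x :=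
      (gamma_contAt (by
        have hd0 : (0:ℝ) ≤ d := Nat.cast_nonneg d
        have hdx : (0:ℝ) < d + x := by linarith
        linarith)).comp (by fun_prop)
    have hG2 : ContinuousAt (fun α : ℝ => Real.Gamma ((2 - α) / 2)) x :=
      (gamma_contAt (by simp only [div_pos_iff]; left; constructor <;> linarith)).comp
        (by fun_prop)
    have h2x : ContinuousAt (fun α : ℝ => (2:ℝ) ^ (α - 2)) x :=
      (Real.continuousAt_const_rpow (by norm_num : (2:ℝ) ≠ 0)).comp
        (by fun_prop : ContinuousAt (fun α : ℝ => α - 2) x)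
    have hden : Real.pi ^ ((d:ℝ)/2) * Real.Gamma ((2 - x)/2) ≠ 0 := by
      have h3 : 0 < Real.Gamma ((2 - x) / 2) :=
        Real.Gamma_pos_of_pos (by simp only [div_pos_iff]; left; constructor <;> linarith)
      have h4 : (0:ℝ) < Real.pi ^ ((d : ℝ) / 2) := Real.rpow_pos_of_pos Real.pi_pos _
      positivity
    exact (((continuousAt_id.mul h2x).mul hG1).div
      (continuousAt_const.mul hG2) hden).continuousWithinAt
  obtain ⟨a, hmem, hmin⟩ := isCompact_Icc.exists_isMinOn hne hcont
  refine ⟨stableConst d a, stableConst_pos (by linarith [hmem.1]) (by linarith [hmem.2]), ?_⟩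
  exact fun α hα => hmin hα

lemma couplingDensity_nonneg {d : ℕ} {α η detfac : ℝ} (h0 : 0 < α) (h2 : α < 2)
    (hdet : 0 ≤ detfac) (Φ : EuclideanSpace ℝ (Fin d) → EuclideanSpace ℝ (Fin d))
    (z : EuclideanSpace ℝ (Fin d)) : 0 ≤ couplingDensity α η detfac Φ z := by
  have hc := (stableConst_pos (d := d) h0 h2).le
  unfold couplingDensity
  refine le_min ?_ ?_ <;> split <;> positivity

lemma ite_meas {d : ℕ} (c e η : ℝ) {Φ : EuclideanSpace ℝ (Fin d) → EuclideanSpace ℝ (Fin d)}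
    (hΦ : Continuous Φ) :
    Measurable (fun z : EuclideanSpace ℝ (Fin d) =>
      if 0 < ‖Φ z‖ ∧ ‖Φ z‖ ≤ η then c * ‖Φ z‖ ^ e else 0) := by
  have hs : MeasurableSet {z : EuclideanSpace ℝ (Fin d) | 0 < ‖Φ z‖ ∧ ‖Φ z‖ ≤ η} :=
    (measurableSet_lt measurable_const hΦ.norm.measurable).inter
      (measurableSet_le hΦ.norm.measurable measurable_const)
  have heq : (fun z : EuclideanSpace ℝ (Fin d) =>
        if 0 < ‖Φ z‖ ∧ ‖Φ z‖ ≤ η then c * ‖Φ z‖ ^ e else 0)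
      = fun z => if 0 < ‖Φ z‖ ∧ ‖Φ z‖ ≤ η
          then c * Real.exp (Real.log ‖Φ z‖ * e) else 0 := by
    funext z
    by_cases h : 0 < ‖Φ z‖ ∧ ‖Φ z‖ ≤ η
    · simp only [if_pos h, Real.rpow_def_of_pos h.1]
    · simp only [if_neg h]
  rw [heq]
  exact Measurable.ite hs
    (measurable_const.mul
      (((Real.measurable_log.comp hΦ.norm.measurable).mul measurable_const).exp))
    measurable_const

lemma couplingDensity_meas {d : ℕ} {α η detfac : ℝ}
    {Φ : EuclideanSpace ℝ (Fin d) → EuclideanSpace ℝ (Fin d)} (hΦ : Continuous Φ) :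
    Measurable (couplingDensity α η detfac Φ) :=
  (ite_meas (stableConst d α) (-((d : ℝ) + α)) η continuous_id).min
    (ite_meas (stableConst d α * detfac) (-((d : ℝ) + α)) η hΦ)

lemma couplingDensity_integrable {d : ℕ} {α η detfac c₂ : ℝ}
    (h0 : 0 < α) (h2 : α < 2) (hη : 0 < η) (hdet : 0 ≤ detfac) (hc₂ : 0 < c₂)
    {Φ : EuclideanSpace ℝ (Fin d) → EuclideanSpace ℝ (Fin d)} (hΦ : Continuous Φ)
    {z₀ : EuclideanSpace ℝ (Fin d)} (hz₀ : z₀ ≠ 0)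
    (hlow : ∀ z, c₂⁻¹ * ‖z - z₀‖ ≤ ‖Φ z‖) :
    Integrable (couplingDensity α η detfac Φ) := by
  have hst := (stableConst_pos (d := d) h0 h2).le
  have hρ₀ : 0 < ‖z₀‖ / 2 := by
    have := norm_pos_iff.2 hz₀; linarith
  set ρ₀ := ‖z₀‖ / 2 with hρ₀def
  set K := stableConst d α * max (ρ₀ ^ (-((d : ℝ) + α)))
      (detfac * (c₂⁻¹ * ρ₀) ^ (-((d : ℝ) + α))) with hK
  have hK0 : 0 ≤ K := by
    have h1 : (0:ℝ) ≤ ρ₀ ^ (-((d : ℝ) + α)) := by positivity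
    exact mul_nonneg hst (le_trans h1 (le_max_left _ _))
  have hbound : ∀ z, couplingDensity α η detfac Φ z
      ≤ Set.indicator (Metric.closedBall (0 : EuclideanSpace ℝ (Fin d)) η) (fun _ => K) z := by
    intro z
    by_cases hz : ‖z‖ ≤ η
    · rw [Set.indicator_of_mem (mem_closedBall_zero_iff.2 hz)]
      by_cases hzρ : ρ₀ ≤ ‖z‖
      · refine le_trans (min_le_left _ _) ?_
        split_ifs with h
        · rw [hK]
          refine mul_le_mul_of_nonneg_left (le_trans ?_ (le_max_left _ _)) hst
          exact Real.rpow_le_rpow_of_nonpos hρ₀ hzρ (neg_nonpos.2 (by positivity))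
        · exact hK0
      · refine le_trans (min_le_right _ _) ?_
        split_ifs with h
        · have h1 : c₂⁻¹ * ρ₀ ≤ ‖Φ z‖ := by
            refine le_trans ?_ (hlow z)
            have : ρ₀ ≤ ‖z - z₀‖ := by
              have h3 := norm_sub_norm_le z₀ z
              have h4 : ‖z₀ - z‖ = ‖z - z₀‖ := norm_sub_rev _ _
              push_neg at hzρ
              rw [hρ₀def] at *
              linarith [hzρ.le]
            exact mul_le_mul_of_nonneg_left this (by positivity)
          have h5 : 0 < c₂⁻¹ * ρ₀ := by positivity
          rw [hK, mul_assoc]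
          refine mul_le_mul_of_nonneg_left (le_trans ?_ (le_max_right _ _)) hst
          exact mul_le_mul_of_nonneg_left
            (Real.rpow_le_rpow_of_nonpos h5 h1 (neg_nonpos.2 (by positivity))) hdet
        · exact hK0
    · rw [Set.indicator_of_notMem (by simpa [mem_closedBall_zero_iff] using hz)]
      refine le_trans (min_le_left _ _) (le_of_eq (if_neg ?_))
      exact fun h => hz h.2
  have hind : Integrable
      (Set.indicator (Metric.closedBall (0 : EuclideanSpace ℝ (Fin d)) η) (fun _ => K)) := by
    refine (integrableOn_const
      measure_closedBall_lt_top.ne).integrable_indicator measurableSet_closedBall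
  refine hind.mono' (couplingDensity_meas hΦ).aestronglyMeasurable (ae_of_all _ fun z => ?_)
  rw [Real.norm_eq_abs, abs_of_nonneg (couplingDensity_nonneg h0 h2 hdet Φ z)]
  exact hbound z

lemma couplingDensity_integrable_affine {d : ℕ} {α η detfac c₂ : ℝ}
    (h0 : 0 < α) (h2 : α < 2) (hη : 0 < η) (hdet : 0 ≤ detfac) (hc₂ : 0 < c₂)
    {Φ : EuclideanSpace ℝ (Fin d) → EuclideanSpace ℝ (Fin d)}
    (L : EuclideanSpace ℝ (Fin d) →ₗ[ℝ] EuclideanSpace ℝ (Fin d))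
    (u : EuclideanSpace ℝ (Fin d))
    (hΦ : ∀ z, Φ z = L z + u)
    (hL1 : ∀ z, c₂⁻¹ * ‖z‖ ≤ ‖L z‖) (hu0 : u ≠ 0)
    (hsurj : Function.Surjective Φ) :
    Integrable (couplingDensity α η detfac Φ) := by
  have hcont : Continuous Φ := by
    have : Φ = fun z => L z + u := funext hΦ
    rw [this]
    exact L.continuous_of_finiteDimensional.add continuous_const
  obtain ⟨z₀, hz₀Φ⟩ := hsurj 0
  have hz₀ : z₀ ≠ 0 := by
    intro h
    apply hu0
    have := hΦ z₀
    rw [hz₀Φ, h, map_zero, zero_add] at this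
    exact this.symm
  have hΦsub : ∀ z, Φ z = L (z - z₀) := by
    intro z
    have h1 := hΦ z; have h2 := hΦ z₀
    rw [hz₀Φ] at h2
    rw [map_sub, h1]
    have h3 : L z₀ + u = 0 := h2.symm
    rw [show L z₀ = -u by linear_combination (norm := abel) h3]
    abel
  have hlow : ∀ z, c₂⁻¹ * ‖z - z₀‖ ≤ ‖Φ z‖ := by
    intro z
    rw [hΦsub z]
    exact hL1 _
  exact couplingDensity_integrable h0 h2 hη hdet hc₂ hcont hz₀ hlow

set_option maxHeartbeats 1000000 in
lemma couplingDensity_lower {d : ℕ} (hd : 1 ≤ d) {α η c₂ ρ detfac : ℝ}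
    (h0 : 0 < α) (h2 : α < 2) (hc₂ : 1 ≤ c₂) (hρ : 0 < ρ) (hρη : 4 * c₂ ^ 2 * ρ ≤ η)
    (hdet : 1 ≤ detfac)
    {Φ : EuclideanSpace ℝ (Fin d) → EuclideanSpace ℝ (Fin d)}
    (L : EuclideanSpace ℝ (Fin d) →ₗ[ℝ] EuclideanSpace ℝ (Fin d))
    (u : EuclideanSpace ℝ (Fin d))
    (hΦ : ∀ z, Φ z = L z + u)
    (hL1 : ∀ z, c₂⁻¹ * ‖z‖ ≤ ‖L z‖) (hL2 : ∀ z, ‖L z‖ ≤ c₂ * ‖z‖)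
    (hu : ‖u‖ ≤ Real.sqrt c₂ * ρ) (hu0 : u ≠ 0)
    (hsurj : Function.Surjective Φ) :
    stableConst d α * (4 * c₂ ^ 2) ^ (-((d : ℝ) + α)) *
        ((volume (ball (0 : EuclideanSpace ℝ (Fin d)) 1)).toReal * (2 : ℝ)⁻¹ ^ d) * ρ ^ (-α)
      ≤ ∫ z : EuclideanSpace ℝ (Fin d), couplingDensity α η detfac Φ z := by
  have hc₂0 : (0:ℝ) < c₂ := by linarith
  set s := Real.sqrt c₂ with hsdef
  have hs1 : 1 ≤ s := by
    rw [hsdef, show (1:ℝ) = Real.sqrt 1 by simp]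
    exact Real.sqrt_le_sqrt hc₂
  have hs0 : (0:ℝ) < s := by linarith
  have hssq : s ^ 2 = c₂ := Real.sq_sqrt hc₂0.le
  have hsc₂ : s ≤ c₂ := by nlinarith
  have hst := stableConst_pos (d := d) h0 h2
  have hcont : Continuous Φ := by
    have : Φ = fun z => L z + u := funext hΦ
    rw [this]
    exact L.continuous_of_finiteDimensional.add continuous_const
  -- the zero of Φ
  obtain ⟨z₀, hz₀Φ⟩ := hsurj 0
  have hz₀ : z₀ ≠ 0 := by
    intro h
    apply hu0
    have := hΦ z₀
    rw [hz₀Φ, h, map_zero, zero_add] at this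
    exact this.symm
  have hΦsub : ∀ z, Φ z = L (z - z₀) := by
    intro z
    have h1 := hΦ z; have h2 := hΦ z₀
    rw [hz₀Φ] at h2
    rw [map_sub, h1]
    have : L z₀ + u = 0 := h2.symm
    abel_nf
    rw [show L z₀ = -u by linear_combination (norm := abel) this]
    abel
  have hlow : ∀ z, c₂⁻¹ * ‖z - z₀‖ ≤ ‖Φ z‖ := by
    intro z
    rw [hΦsub z]
    exact hL1 _
  have hdet0 : (0:ℝ) ≤ detfac := by linarith
  have hint : Integrable (couplingDensity α η detfac Φ) :=
    couplingDensity_integrable h0 h2 (lt_of_lt_of_le (by positivity) hρη) hdet0 hc₂0 hcont hz₀ hlow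
  -- the good set
  set S : Set (EuclideanSpace ℝ (Fin d)) :=
      {z | 2 * s * ρ ≤ ‖Φ z‖ ∧ ‖Φ z‖ ≤ 3 * c₂ * ρ} with hSdef
  have hSmeas : MeasurableSet S :=
    (measurableSet_le measurable_const hcont.norm.measurable).inter
      (measurableSet_le hcont.norm.measurable measurable_const)
  -- bounds on S
  have hznorm : ∀ z ∈ S, 0 < ‖z‖ ∧ ‖z‖ ≤ 4 * c₂ ^ 2 * ρ := by
    rintro z ⟨hz1, hz2⟩
    constructor
    · rcases eq_or_ne z 0 with rfl | hz
      · exfalso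
        have h1 := hΦ 0
        rw [map_zero, zero_add] at h1
        rw [h1] at hz1
        nlinarith
      · exact norm_pos_iff.2 hz
    · have h1 : c₂⁻¹ * ‖z‖ ≤ ‖L z‖ := hL1 z
      have h2 : ‖L z‖ ≤ ‖Φ z‖ + ‖u‖ := by
        have : L z = Φ z - u := by rw [hΦ z]; abel
        rw [this]
        exact norm_sub_le _ _
      have h3 : ‖L z‖ ≤ 3 * c₂ * ρ + s * ρ := by linarith
      have h4 : ‖z‖ ≤ c₂ * (3 * c₂ * ρ + s * ρ) := by
        rw [← inv_mul_le_iff₀ hc₂0]  -- maybe wrong name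
        linarith
      nlinarith
  have hμS : volume S ≠ ⊤ := by
    have hsub : S ⊆ closedBall (0 : EuclideanSpace ℝ (Fin d)) (4 * c₂ ^ 2 * ρ) := by
      intro z hz
      exact mem_closedBall_zero_iff.2 (hznorm z hz).2
    exact ((measure_mono hsub).trans_lt measure_closedBall_lt_top).ne
  -- pointwise lower bound on S
  set cS := stableConst d α * (4 * c₂ ^ 2 * ρ) ^ (-((d : ℝ) + α)) with hcSdef
  have hptwise : ∀ z ∈ S, cS ≤ couplingDensity α η detfac Φ z := by
    rintro z hzS
    obtain ⟨hz1, hz2⟩ := hzS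
    obtain ⟨hz3, hz4⟩ := hznorm z ⟨hz1, hz2⟩
    have hΦpos : 0 < ‖Φ z‖ := by nlinarith
    have hΦle : ‖Φ z‖ ≤ η := by nlinarith
    have hzle : ‖z‖ ≤ η := by nlinarith
    refine le_min ?_ ?_
    · rw [if_pos ⟨hz3, hzle⟩, hcSdef]
      exact mul_le_mul_of_nonneg_left
        (Real.rpow_le_rpow_of_nonpos hz3 hz4 (neg_nonpos.2 (by positivity))) hst.le
    · rw [if_pos ⟨hΦpos, hΦle⟩, hcSdef, mul_assoc (stableConst d α) detfac]
      have h5 : (4 * c₂ ^ 2 * ρ) ^ (-((d : ℝ) + α)) ≤ ‖Φ z‖ ^ (-((d : ℝ) + α)) := by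
        refine Real.rpow_le_rpow_of_nonpos hΦpos (by nlinarith) (neg_nonpos.2 (by positivity))
      refine mul_le_mul_of_nonneg_left ?_ hst.le
      calc (4 * c₂ ^ 2 * ρ) ^ (-((d : ℝ) + α))
          ≤ ‖Φ z‖ ^ (-((d : ℝ) + α)) := h5
        _ = 1 * ‖Φ z‖ ^ (-((d : ℝ) + α)) := (one_mul _).symm
        _ ≤ detfac * ‖Φ z‖ ^ (-((d : ℝ) + α)) :=
            mul_le_mul_of_nonneg_right hdet (by positivity)
  -- ball inside S
  have hd0 : 0 < d := hd
  set e : EuclideanSpace ℝ (Fin d) := EuclideanSpace.single ⟨0, hd0⟩ (1:ℝ) with hedef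
  have he : ‖e‖ = 1 := by simp [hedef, EuclideanSpace.norm_single]
  set p : EuclideanSpace ℝ (Fin d) := (((2 * s + 3 * c₂) / 2) * ρ) • e with hpdef
  have hp : ‖p‖ = ((2 * s + 3 * c₂) / 2) * ρ := by
    rw [hpdef, norm_smul, he, mul_one, Real.norm_eq_abs, abs_of_pos (by positivity)]
  obtain ⟨z₁, hz₁⟩ := hsurj p
  have hball : ball z₁ (ρ / 2) ⊆ S := by
    intro z hz
    rw [mem_ball] at hz
    have hd1 : ‖Φ z - p‖ ≤ c₂ * (ρ / 2) := by
      have : Φ z - p = L (z - z₁) := by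
        rw [hΦ z, ← hz₁, hΦ z₁, map_sub]; abel
      rw [this]
      refine le_trans (hL2 _) ?_
      have : ‖z - z₁‖ ≤ ρ / 2 := by
        rw [← dist_eq_norm]
        exact hz.le
      nlinarith
    have hd2 := norm_sub_norm_le (Φ z) p
    have hd3 := norm_sub_norm_le p (Φ z)
    rw [norm_sub_rev] at hd3
    constructor
    · rw [hp] at hd3; nlinarith
    · rw [hp] at hd2; nlinarith
  -- volume bounds
  haveI : Nontrivial (EuclideanSpace ℝ (Fin d)) :=
    Module.nontrivial_of_finrank_pos (R := ℝ) (by rw [finrank_euclideanSpace_fin]; omega)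
  set vb := (volume (ball (0 : EuclideanSpace ℝ (Fin d)) 1)).toReal with hvbdef
  have hballvol : (volume (ball z₁ (ρ / 2))).toReal = (ρ / 2) ^ d * vb := by
    rw [Measure.addHaar_ball volume z₁ (by positivity : (0:ℝ) ≤ ρ / 2),
      finrank_euclideanSpace_fin, ENNReal.toReal_mul, ENNReal.toReal_ofReal (by positivity)]
  have hSvol : (ρ / 2) ^ d * vb ≤ (volume S).toReal := by
    rw [← hballvol]
    exact ENNReal.toReal_mono hμS (measure_mono hball)
  -- put it together
  have hcS0 : 0 ≤ cS := by
    rw [hcSdef]; positivity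
  have hchain1 : cS * (volume S).toReal ≤ ∫ z in S, couplingDensity α η detfac Φ z :=
    setIntegral_ge_of_const_le_real hSmeas hμS hptwise hint.integrableOn
  have hchain2 : ∫ z in S, couplingDensity α η detfac Φ z
      ≤ ∫ z, couplingDensity α η detfac Φ z :=
    setIntegral_le_integral hint (ae_of_all _ (couplingDensity_nonneg h0 h2 hdet0 Φ))
  have hkey : stableConst d α * (4 * c₂ ^ 2) ^ (-((d : ℝ) + α)) * (vb * (2:ℝ)⁻¹ ^ d) * ρ ^ (-α)
      = cS * ((ρ / 2) ^ d * vb) := by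
    rw [hcSdef, Real.mul_rpow (by positivity) hρ.le]
    have h6 : ρ ^ (-α) = ρ ^ (-((d : ℝ) + α)) * ρ ^ (d : ℕ) := by
      rw [← Real.rpow_natCast ρ d, ← Real.rpow_add hρ]
      ring_nf
    rw [h6, show (ρ / 2) ^ d = ρ ^ d * (2:ℝ)⁻¹ ^ d by rw [div_eq_mul_inv, mul_pow]]
    ring
  rw [hkey]
  calc cS * ((ρ / 2) ^ d * vb) ≤ cS * (volume S).toReal := by
        have := mul_le_mul_of_nonneg_left hSvol hcS0
        simpa using this
    _ ≤ _ := le_trans hchain1 hchain2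

lemma toEuc_mul {d : ℕ} (M N : Matrix (Fin d) (Fin d) ℝ) (z : EuclideanSpace ℝ (Fin d)) :
    Matrix.toEuclideanLin (M * N) z = Matrix.toEuclideanLin M (Matrix.toEuclideanLin N z) := by
  rw [Matrix.toEuclideanLin_eq_toLin, Matrix.toLin_mul _ (PiLp.basisFun 2 ℝ (Fin d)) _]
  rfl

lemma toEuc_one {d : ℕ} (z : EuclideanSpace ℝ (Fin d)) :
    Matrix.toEuclideanLin (1 : Matrix (Fin d) (Fin d) ℝ) z = z := by
  rw [Matrix.toEuclideanLin_eq_toLin, Matrix.toLin_one]; rfl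

lemma toEuc_inv_cancel {d : ℕ} {B : Matrix (Fin d) (Fin d) ℝ} (hB : IsUnit B)
    (z : EuclideanSpace ℝ (Fin d)) :
    Matrix.toEuclideanLin B⁻¹ (Matrix.toEuclideanLin B z) = z := by
  rw [← toEuc_mul, Matrix.nonsing_inv_mul _ ((Matrix.isUnit_iff_isUnit_det _).mp hB), toEuc_one]

lemma toEuc_cancel_inv {d : ℕ} {B : Matrix (Fin d) (Fin d) ℝ} (hB : IsUnit B)
    (z : EuclideanSpace ℝ (Fin d)) :
    Matrix.toEuclideanLin B (Matrix.toEuclideanLin B⁻¹ z) = z := by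
  rw [← toEuc_mul, Matrix.mul_nonsing_inv _ ((Matrix.isUnit_iff_isUnit_det _).mp hB), toEuc_one]

lemma norm_bounds {d : ℕ} {c₂ : ℝ} (hc₂ : 1 ≤ c₂) {T : Matrix (Fin d) (Fin d) ℝ}
    (hT : ∀ v : EuclideanSpace ℝ (Fin d),
      c₂⁻¹ * ‖v‖ ^ 2 ≤ ‖Matrix.toEuclideanLin T v‖ ^ 2 ∧
        ‖Matrix.toEuclideanLin T v‖ ^ 2 ≤ c₂ * ‖v‖ ^ 2)
    (v : EuclideanSpace ℝ (Fin d)) :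
    (Real.sqrt c₂)⁻¹ * ‖v‖ ≤ ‖Matrix.toEuclideanLin T v‖ ∧
      ‖Matrix.toEuclideanLin T v‖ ≤ Real.sqrt c₂ * ‖v‖ := by
  have hc₂0 : (0:ℝ) < c₂ := by linarith
  obtain ⟨h1, h2⟩ := hT v
  constructor
  · have := Real.sqrt_le_sqrt h1
    rwa [Real.sqrt_mul (by positivity), Real.sqrt_sq (norm_nonneg _),
      Real.sqrt_sq (norm_nonneg _), Real.sqrt_inv] at this
  · have := Real.sqrt_le_sqrt h2
    rwa [Real.sqrt_mul hc₂0.le, Real.sqrt_sq (norm_nonneg _),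
      Real.sqrt_sq (norm_nonneg _)] at this

set_option maxHeartbeats 1000000 in
theorem stmt3 (d : ℕ) (hd : 1 ≤ d) (α₀ ϑ₀ c₂ : ℝ)
    (hα₀ : 1 < α₀) (hα₀ϑ₀ : α₀ < ϑ₀) (hϑ₀ : ϑ₀ < 2) (hc₂ : 1 ≤ c₂) :
    ∃ C ≥ (1 : ℝ), ∀ κ η : ℝ, 0 < κ → 0 < η → ∀ α ∈ Set.Icc α₀ ϑ₀,
      ∀ A B : Matrix (Fin d) (Fin d) ℝ, IsUnit A → IsUnit B →
      (∀ v : EuclideanSpace ℝ (Fin d),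
        c₂⁻¹ * ‖v‖ ^ 2 ≤ ‖Matrix.toEuclideanLin A v‖ ^ 2 ∧
          ‖Matrix.toEuclideanLin A v‖ ^ 2 ≤ c₂ * ‖v‖ ^ 2) →
      (∀ v : EuclideanSpace ℝ (Fin d),
        c₂⁻¹ * ‖v‖ ^ 2 ≤ ‖Matrix.toEuclideanLin B v‖ ^ 2 ∧
          ‖Matrix.toEuclideanLin B v‖ ^ 2 ≤ c₂ * ‖v‖ ^ 2) →
      ∀ x y : EuclideanSpace ℝ (Fin d),
        0 < ‖x - y‖ → ‖x - y‖ ≤ min κ η / (4 * c₂ ^ 2) →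
        C⁻¹ * ‖x - y‖ ^ (-α)
          ≤ ∫ z : EuclideanSpace ℝ (Fin d),
              (couplingDensity α η |(A⁻¹ * B).det| (psiInvMap κ A B x y) z +
                couplingDensity α η |(B⁻¹ * A).det| (psiMap κ A B x y) z) := by
  classical
  have hc₂0 : (0:ℝ) < c₂ := by linarith
  obtain ⟨m, hm0, hmle⟩ := stableConst_min d hα₀ hα₀ϑ₀ hϑ₀
  set vb := (volume (Metric.ball (0 : EuclideanSpace ℝ (Fin d)) 1)).toReal with hvbdef
  have hvb : 0 < vb := by
    rw [hvbdef]
    exact ENNReal.toReal_pos (measure_ball_pos volume 0 one_pos).ne' measure_ball_lt_top.ne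
  set K₀ := m * (4 * c₂ ^ 2) ^ (-((d : ℝ) + 2)) * (vb * (2:ℝ)⁻¹ ^ d) with hK₀def
  have hK₀ : 0 < K₀ := by
    have := Real.rpow_pos_of_pos (show (0:ℝ) < 4 * c₂ ^ 2 by positivity) (-((d : ℝ) + 2))
    positivity
  refine ⟨max 1 K₀⁻¹, le_max_left _ _, ?_⟩
  intro κ η hκ hη α hα A B hAu hBu hAb hBb x y hxy hxyle
  have hα1 : 1 < α := lt_of_lt_of_le hα₀ hα.1
  have hα2 : α < 2 := lt_of_le_of_lt hα.2 hϑ₀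
  have h0 : 0 < α := by linarith
  set s := Real.sqrt c₂ with hsdef
  have hs1 : 1 ≤ s := by
    rw [hsdef, show (1:ℝ) = Real.sqrt 1 by simp]
    exact Real.sqrt_le_sqrt hc₂
  have hs0 : (0:ℝ) < s := by linarith
  have hssq : s * s = c₂ := Real.mul_self_sqrt hc₂0.le
  set w : EuclideanSpace ℝ (Fin d) := x - y with hwdef
  set ρ := ‖w‖ with hρdef
  have hρκ : ρ ≤ κ := by
    refine hxyle.trans ?_
    rw [div_le_iff₀ (by positivity)]
    calc min κ η ≤ κ := min_le_left _ _
      _ ≤ κ * (4 * c₂ ^ 2) := by nlinarith [mul_nonneg hκ.le (show (0:ℝ) ≤ 4 * c₂ ^ 2 - 1 by nlinarith)]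
  have hρη : 4 * c₂ ^ 2 * ρ ≤ η := by
    have h1 : ρ ≤ η / (4 * c₂ ^ 2) := hxyle.trans (by
      gcongr
      exact min_le_right _ _)
    rw [le_div_iff₀ (by positivity)] at h1
    linarith
  have htrunc : truncVec κ w = w := by
    unfold truncVec
    rw [min_eq_right hρκ, div_self hxy.ne', one_smul]
  -- norm bounds
  have hnA := norm_bounds hc₂ hAb
  have hnB := norm_bounds hc₂ hBb
  have hnAinv : ∀ v : EuclideanSpace ℝ (Fin d),
      s⁻¹ * ‖v‖ ≤ ‖Matrix.toEuclideanLin A⁻¹ v‖ ∧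
        ‖Matrix.toEuclideanLin A⁻¹ v‖ ≤ s * ‖v‖ := by
    intro v
    obtain ⟨h1, h2⟩ := hnA (Matrix.toEuclideanLin A⁻¹ v)
    rw [toEuc_cancel_inv hAu] at h1 h2
    constructor
    · rw [inv_mul_le_iff₀ hs0]; exact h2
    · rw [inv_mul_le_iff₀ hs0] at h1; exact h1
  have hnBinv : ∀ v : EuclideanSpace ℝ (Fin d),
      s⁻¹ * ‖v‖ ≤ ‖Matrix.toEuclideanLin B⁻¹ v‖ ∧
        ‖Matrix.toEuclideanLin B⁻¹ v‖ ≤ s * ‖v‖ := by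
    intro v
    obtain ⟨h1, h2⟩ := hnB (Matrix.toEuclideanLin B⁻¹ v)
    rw [toEuc_cancel_inv hBu] at h1 h2
    constructor
    · rw [inv_mul_le_iff₀ hs0]; exact h2
    · rw [inv_mul_le_iff₀ hs0] at h1; exact h1
  have hinvc₂ : c₂⁻¹ = s⁻¹ * s⁻¹ := by rw [← hssq, mul_inv]
  -- affine decompositions
  set L₁ := Matrix.toEuclideanLin (A⁻¹ * B) with hL₁def
  set u₁ : EuclideanSpace ℝ (Fin d) := -(Matrix.toEuclideanLin A⁻¹ w) with hu₁def
  have hΦ₁ : ∀ z, psiInvMap κ A B x y z = L₁ z + u₁ := by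
    intro z
    unfold psiInvMap
    rw [← hwdef, htrunc, map_sub, hL₁def, toEuc_mul, hu₁def, sub_eq_add_neg]
  have hL₁low : ∀ z : EuclideanSpace ℝ (Fin d), c₂⁻¹ * ‖z‖ ≤ ‖L₁ z‖ := by
    intro z
    rw [hL₁def, toEuc_mul, hinvc₂, mul_assoc]
    calc s⁻¹ * (s⁻¹ * ‖z‖) ≤ s⁻¹ * ‖Matrix.toEuclideanLin B z‖ :=
          mul_le_mul_of_nonneg_left (hnB z).1 (by positivity)
      _ ≤ _ := (hnAinv _).1
  have hL₁up : ∀ z : EuclideanSpace ℝ (Fin d), ‖L₁ z‖ ≤ c₂ * ‖z‖ := by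
    intro z
    rw [hL₁def, toEuc_mul, ← hssq, mul_assoc]
    calc ‖Matrix.toEuclideanLin A⁻¹ (Matrix.toEuclideanLin B z)‖
        ≤ s * ‖Matrix.toEuclideanLin B z‖ := (hnAinv _).2
      _ ≤ s * (s * ‖z‖) := mul_le_mul_of_nonneg_left (hnB z).2 hs0.le
  have hu₁norm : ‖u₁‖ ≤ s * ρ := by
    rw [hu₁def, norm_neg]
    exact (hnAinv w).2
  have hu₁0 : u₁ ≠ 0 := by
    rw [hu₁def, neg_ne_zero]
    have := (hnAinv w).1
    intro h
    rw [h, norm_zero] at this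
    nlinarith [mul_pos (inv_pos.2 hs0) hxy]
  have hsurj₁ : Function.Surjective (psiInvMap κ A B x y) := by
    intro t
    refine ⟨Matrix.toEuclideanLin B⁻¹ (Matrix.toEuclideanLin A t + w), ?_⟩
    unfold psiInvMap
    rw [← hwdef, htrunc, toEuc_cancel_inv hBu, add_sub_cancel_right, toEuc_inv_cancel hAu]
  set L₂ := Matrix.toEuclideanLin (B⁻¹ * A) with hL₂def
  set u₂ : EuclideanSpace ℝ (Fin d) := Matrix.toEuclideanLin B⁻¹ w with hu₂def
  have hΦ₂ : ∀ z, psiMap κ A B x y z = L₂ z + u₂ := by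
    intro z
    unfold psiMap
    rw [← hwdef, htrunc, map_add, hL₂def, toEuc_mul, hu₂def]
  have hL₂low : ∀ z : EuclideanSpace ℝ (Fin d), c₂⁻¹ * ‖z‖ ≤ ‖L₂ z‖ := by
    intro z
    rw [hL₂def, toEuc_mul, hinvc₂, mul_assoc]
    calc s⁻¹ * (s⁻¹ * ‖z‖) ≤ s⁻¹ * ‖Matrix.toEuclideanLin A z‖ :=
          mul_le_mul_of_nonneg_left (hnA z).1 (by positivity)
      _ ≤ _ := (hnBinv _).1
  have hL₂up : ∀ z : EuclideanSpace ℝ (Fin d), ‖L₂ z‖ ≤ c₂ * ‖z‖ := by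
    intro z
    rw [hL₂def, toEuc_mul, ← hssq, mul_assoc]
    calc ‖Matrix.toEuclideanLin B⁻¹ (Matrix.toEuclideanLin A z)‖
        ≤ s * ‖Matrix.toEuclideanLin A z‖ := (hnBinv _).2
      _ ≤ s * (s * ‖z‖) := mul_le_mul_of_nonneg_left (hnA z).2 hs0.le
  have hu₂norm : ‖u₂‖ ≤ s * ρ := by
    rw [hu₂def]
    exact (hnBinv w).2
  have hu₂0 : u₂ ≠ 0 := by
    rw [hu₂def]
    have := (hnBinv w).1
    intro h
    rw [h, norm_zero] at this
    nlinarith [mul_pos (inv_pos.2 hs0) hxy]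
  have hsurj₂ : Function.Surjective (psiMap κ A B x y) := by
    intro t
    refine ⟨Matrix.toEuclideanLin A⁻¹ (Matrix.toEuclideanLin B t - w), ?_⟩
    unfold psiMap
    rw [← hwdef, htrunc, toEuc_cancel_inv hAu, sub_add_cancel, toEuc_inv_cancel hBu]
  -- determinants
  have hprod : |(A⁻¹ * B).det| * |(B⁻¹ * A).det| = 1 := by
    have hmm : (A⁻¹ * B) * (B⁻¹ * A) = 1 := by
      rw [mul_assoc, ← mul_assoc B,
        Matrix.mul_nonsing_inv _ ((Matrix.isUnit_iff_isUnit_det _).mp hBu), one_mul,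
        Matrix.nonsing_inv_mul _ ((Matrix.isUnit_iff_isUnit_det _).mp hAu)]
    rw [← abs_mul, ← Matrix.det_mul, hmm, Matrix.det_one, abs_one]
  -- integrability of both densities
  have hη' : 0 < η := hη
  have hf₁ : Integrable (couplingDensity α η |(A⁻¹ * B).det|
      (psiInvMap κ A B x y)) :=
    couplingDensity_integrable_affine h0 hα2 hη' (abs_nonneg _) hc₂0 L₁ u₁ hΦ₁ hL₁low hu₁0 hsurj₁
  have hf₂ : Integrable (couplingDensity α η |(B⁻¹ * A).det|
      (psiMap κ A B x y)) :=
    couplingDensity_integrable_affine h0 hα2 hη' (abs_nonneg _) hc₂0 L₂ u₂ hΦ₂ hL₂low hu₂0 hsurj₂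
  -- final constant comparison
  have hCinv : (max 1 K₀⁻¹)⁻¹ ≤ K₀ := by
    have h1 : K₀⁻¹ ≤ max 1 K₀⁻¹ := le_max_right _ _
    calc (max 1 K₀⁻¹)⁻¹ ≤ (K₀⁻¹)⁻¹ := by
          apply inv_anti₀ (by positivity) h1
      _ = K₀ := inv_inv _
  have hK₀le : K₀ ≤ stableConst d α * (4 * c₂ ^ 2) ^ (-((d : ℝ) + α)) * (vb * (2:ℝ)⁻¹ ^ d) := by
    rw [hK₀def]
    have h1 : (4 * c₂ ^ 2) ^ (-((d : ℝ) + 2)) ≤ (4 * c₂ ^ 2) ^ (-((d : ℝ) + α)) :=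
      Real.rpow_le_rpow_of_exponent_le (by nlinarith) (by linarith)
    have h2 : m ≤ stableConst d α := hmle α hα
    have h3 : (0:ℝ) ≤ (4 * c₂ ^ 2) ^ (-((d : ℝ) + 2)) := by positivity
    have h4 : (0:ℝ) ≤ vb * (2:ℝ)⁻¹ ^ d := by positivity
    refine mul_le_mul_of_nonneg_right ?_ h4
    exact mul_le_mul h2 h1 h3 (le_trans hm0.le h2)
  have hbase : (max 1 K₀⁻¹)⁻¹ * ρ ^ (-α)
      ≤ stableConst d α * (4 * c₂ ^ 2) ^ (-((d : ℝ) + α)) * (vb * (2:ℝ)⁻¹ ^ d) * ρ ^ (-α) := by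
    refine mul_le_mul_of_nonneg_right (le_trans hCinv hK₀le) ?_
    positivity
  rw [integral_add hf₁ hf₂]
  rcases le_total 1 |(A⁻¹ * B).det| with hdge | hdle
  · have hlow := couplingDensity_lower hd h0 hα2 hc₂ hxy hρη hdge L₁ u₁ hΦ₁ hL₁low hL₁up
      hu₁norm hu₁0 hsurj₁
    have h2nd : 0 ≤ ∫ z, couplingDensity α η |(B⁻¹ * A).det| (psiMap κ A B x y) z :=
      integral_nonneg (couplingDensity_nonneg h0 hα2 (abs_nonneg _) _)
    calc (max 1 K₀⁻¹)⁻¹ * ρ ^ (-α)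
        ≤ stableConst d α * (4 * c₂ ^ 2) ^ (-((d : ℝ) + α)) * (vb * (2:ℝ)⁻¹ ^ d) * ρ ^ (-α) :=
          hbase
      _ ≤ ∫ z, couplingDensity α η |(A⁻¹ * B).det| (psiInvMap κ A B x y) z := hlow
      _ ≤ _ := le_add_of_nonneg_right h2nd
  · have hdge₂ : 1 ≤ |(B⁻¹ * A).det| := by
      rcases eq_or_lt_of_le (abs_nonneg ((A⁻¹ * B).det)) with h | h
      · exfalso; rw [← h] at hprod; simp at hprod
      · nlinarith
    have hlow := couplingDensity_lower hd h0 hα2 hc₂ hxy hρη hdge₂ L₂ u₂ hΦ₂ hL₂low hL₂up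
      hu₂norm hu₂0 hsurj₂
    have h1st : 0 ≤ ∫ z, couplingDensity α η |(A⁻¹ * B).det| (psiInvMap κ A B x y) z :=
      integral_nonneg (couplingDensity_nonneg h0 hα2 (abs_nonneg _) _)
    calc (max 1 K₀⁻¹)⁻¹ * ρ ^ (-α)
        ≤ stableConst d α * (4 * c₂ ^ 2) ^ (-((d : ℝ) + α)) * (vb * (2:ℝ)⁻¹ ^ d) * ρ ^ (-α) :=
          hbase
      _ ≤ ∫ z, couplingDensity α η |(B⁻¹ * A).det| (psiMap κ A B x y) z := hlow
      _ ≤ _ := le_add_of_nonneg_left h1st
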